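/- Every analytic subset of Cantor space is either countable or has cardinality 2^ℵ₀ (the perfect set property for analytic sets). -/

import Mathlib

open Set PiNat

-- condensation points
lemma cond_pts {β : Type*} [TopologicalSpace β] [SecondCountableTopology β]
    {S : Set β} (hS : ¬S.Countable) :
    ∃ y₀ y₁, y₀ ∈ S ∧ y₁ ∈ S ∧ y₀ ≠ y₁ ∧
      (∀ U, IsOpen U → y₀ ∈ U → ¬(S ∩ U).Countable) ∧
      (∀ U, IsOpen U → y₁ ∈ U → ¬(S ∩ U).Countable) := by
  classical
  set B := TopologicalSpace.countableBasis β with hB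
  have hBc : B.Countable := TopologicalSpace.countable_countableBasis β
  have hBb := TopologicalSpace.isBasis_countableBasis β
  set bad : Set β := ⋃ U ∈ {U ∈ B | (S ∩ U).Countable}, S ∩ U with hbad
  have hbadc : bad.Countable := by
    apply Set.Countable.biUnion (hBc.mono (sep_subset _ _))
    intro U hU; exact hU.2
  set K := S \ bad with hK
  have hKunc : ¬K.Countable := by
    intro h
    exact hS ((h.union hbadc).mono (by intro y hy; by_cases h' : y ∈ bad <;> simp [hK, h', hy]))
  have hKprop : ∀ y ∈ K, ∀ U, IsOpen U → y ∈ U → ¬(S ∩ U).Countable := by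
    rintro y ⟨hyS, hyb⟩ U hU hyU hcnt
    obtain ⟨V, hVB, hyV, hVU⟩ := hBb.exists_subset_of_mem_open hyU hU
    exact hyb (mem_biUnion ⟨hVB, hcnt.mono (inter_subset_inter_right _ hVU)⟩ ⟨hyS, hyV⟩)
  have : ¬K.Subsingleton := fun h => hKunc h.countable
  rw [Set.not_subsingleton_iff] at this
  obtain ⟨y₀, hy₀, y₁, hy₁, hne⟩ := this
  exact ⟨y₀, y₁, hy₀.1, hy₁.1, hne, hKprop _ hy₀, hKprop _ hy₁⟩

-- extension of a list to a sequence
def extSeq (s : List ℕ) : ℕ → ℕ := fun i => s.reverse.getD i 0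

lemma extSeq_res (x : ℕ → ℕ) (m : ℕ) : ∀ i < m, extSeq (res x m) i = x i := by
  induction m with
  | zero => intro i hi; omega
  | succ m ih =>
    intro i hi
    simp only [extSeq, res_succ, List.reverse_cons]
    rcases lt_or_eq_of_le (Nat.lt_succ_iff.mp hi) with h | h
    · rw [List.getD_append _ _ _ _ (by simp [res_length]; omega)]
      exact ih i h
    · subst h
      rw [List.getD_append_right _ _ _ _ (by simp [res_length])]
      simp [res_length]

lemma cylinder_extSeq_res (x : ℕ → ℕ) (m : ℕ) :
    cylinder (extSeq (res x m)) m = cylinder x m := by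
  rw [← mem_cylinder_iff_eq]
  exact mem_cylinder_iff.2 (extSeq_res x m)

-- refinement: inside an uncountable trace on an open set, find a cylinder with uncountable image
lemma refine_cyl {f : (ℕ → ℕ) → (ℕ → Bool)} (hf : Continuous f) (c : ℕ → ℕ) (n : ℕ)
    {W : Set (ℕ → Bool)} (hW : IsOpen W)
    (h : ¬(f '' cylinder c n ∩ W).Countable) :
    ∃ p : (ℕ → ℕ) × ℕ, n < p.2 ∧ cylinder p.1 p.2 ⊆ cylinder c n ∧
      f '' cylinder p.1 p.2 ⊆ W ∧ ¬(f '' cylinder p.1 p.2).Countable := by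
  classical
  set O : Set (ℕ → ℕ) := cylinder c n ∩ f ⁻¹' W with hO
  have hOopen : IsOpen O := (isOpen_cylinder _ _ _).inter (hW.preimage hf)
  have himg : f '' O = f '' cylinder c n ∩ W := image_inter_preimage f _ _
  set G : List ℕ → Set (ℕ → Bool) := fun s =>
    if n < s.length ∧ cylinder (extSeq s) s.length ⊆ O then f '' cylinder (extSeq s) s.length
    else ∅ with hG
  have hcover : f '' O ⊆ ⋃ s : List ℕ, G s := by
    rintro y ⟨x, hx, rfl⟩
    obtain ⟨v, ⟨z, m, rfl⟩, hxv, hvO⟩ :=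
      (isTopologicalBasis_cylinders (fun _ : ℕ => ℕ)).exists_subset_of_mem_open hx hOopen
    rw [mem_cylinder_iff_eq] at hxv
    set m' := max m (n + 1) with hm'
    have hsub : cylinder x m' ⊆ O := by
      refine Subset.trans ?_ hvO
      rw [← hxv]; exact cylinder_anti x (le_max_left _ _)
    have hceq' : cylinder (extSeq (res x m')) m' = cylinder x m' := cylinder_extSeq_res x m'
    have hGs : G (res x m') = f '' cylinder x m' := by
      rw [hG]
      simp only [res_length, hceq']
      rw [if_pos ⟨by omega, hsub⟩]
    exact mem_iUnion.2 ⟨res x m', hGs ▸ ⟨x, self_mem_cylinder x m', rfl⟩⟩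
  have : ¬(⋃ s : List ℕ, G s).Countable := fun hcnt => by
    rw [himg] at hcover; exact h (hcnt.mono hcover)
  have : ∃ s : List ℕ, ¬(G s).Countable := by
    by_contra hall
    push_neg at hall
    exact this (countable_iUnion hall)
  obtain ⟨s, hs⟩ := this
  by_cases hcond : n < s.length ∧ cylinder (extSeq s) s.length ⊆ O
  · refine ⟨(extSeq s, s.length), hcond.1, ?_, ?_, ?_⟩
    · exact hcond.2.trans (inter_subset_left)
    · exact (image_mono (f := f) (hcond.2.trans inter_subset_right)).trans
        (by rw [image_preimage_eq_inter_range]; exact inter_subset_left)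
    · have hh := hs
      rw [hG] at hh
      simp only [if_pos hcond] at hh
      exact hh
  · exfalso; rw [hG] at hs; simp only [if_neg hcond] at hs; exact hs countable_empty

-- splitting lemma
lemma split_cyl {f : (ℕ → ℕ) → (ℕ → Bool)} (hf : Continuous f) (p : (ℕ → ℕ) × ℕ)
    (h : ¬(f '' cylinder p.1 p.2).Countable) :
    ∃ q r : (ℕ → ℕ) × ℕ, p.2 < q.2 ∧ p.2 < r.2 ∧
      cylinder q.1 q.2 ⊆ cylinder p.1 p.2 ∧ cylinder r.1 r.2 ⊆ cylinder p.1 p.2 ∧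
      ¬(f '' cylinder q.1 q.2).Countable ∧ ¬(f '' cylinder r.1 r.2).Countable ∧
      Disjoint (f '' cylinder q.1 q.2) (f '' cylinder r.1 r.2) := by
  obtain ⟨y₀, y₁, -, -, hne, h₀, h₁⟩ := cond_pts h
  obtain ⟨k, hk⟩ : ∃ k, y₀ k ≠ y₁ k := by
    by_contra hc; push_neg at hc; exact hne (funext hc)
  have hW₀ : IsOpen (cylinder y₀ (k + 1)) := isOpen_cylinder _ _ _
  have hW₁ : IsOpen (cylinder y₁ (k + 1)) := isOpen_cylinder _ _ _
  have hWdisj : Disjoint (cylinder y₀ (k + 1)) (cylinder y₁ (k + 1)) := by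
    rw [Set.disjoint_left]
    intro z hz₀ hz₁
    exact hk ((mem_cylinder_iff.1 hz₀ k (by omega)).symm.trans
      (mem_cylinder_iff.1 hz₁ k (by omega)))
  obtain ⟨q, hq1, hq2, hq3, hq4⟩ := refine_cyl hf p.1 p.2 hW₀
    (h₀ _ hW₀ (self_mem_cylinder _ _))
  obtain ⟨r, hr1, hr2, hr3, hr4⟩ := refine_cyl hf p.1 p.2 hW₁
    (h₁ _ hW₁ (self_mem_cylinder _ _))
  exact ⟨q, r, hq1, hr1, hq2, hr2, hq4, hr4,
    hWdisj.mono hq3 hr3⟩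

/-- Perfect set property for analytic sets: every analytic subset of Cantor space
is either countable or has cardinality `2^ℵ₀`. -/
theorem stmt_6 (A : Set (ℕ → Bool)) (hA : MeasureTheory.AnalyticSet A) :
    A.Countable ∨ Cardinal.mk A = 2 ^ Cardinal.aleph0 := by
  classical
  by_cases hc : A.Countable
  · exact Or.inl hc
  right
  rw [MeasureTheory.AnalyticSet] at hA
  rcases hA with rfl | ⟨f, hf, rfl⟩
  · exact absurd countable_empty hc
  -- construct the Cantor scheme
  have key : ∀ p : (ℕ → ℕ) × ℕ, ¬(f '' cylinder p.1 p.2).Countable →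
      ∃ q r : (ℕ → ℕ) × ℕ, p.2 < q.2 ∧ p.2 < r.2 ∧
        cylinder q.1 q.2 ⊆ cylinder p.1 p.2 ∧ cylinder r.1 r.2 ⊆ cylinder p.1 p.2 ∧
        ¬(f '' cylinder q.1 q.2).Countable ∧ ¬(f '' cylinder r.1 r.2).Countable ∧
        Disjoint (f '' cylinder q.1 q.2) (f '' cylinder r.1 r.2) :=
    fun p hp => split_cyl hf p hp
  choose q r hq hr hqsub hrsub hqunc hrunc hdisj using key
  set D : List Bool → (ℕ → ℕ) × ℕ := fun l =>
    l.rec ((fun _ => 0 : ℕ → ℕ), 0)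
      (fun b _ ih => if h : ¬(f '' cylinder ih.1 ih.2).Countable then
        (if b then r ih h else q ih h) else ih) with hD
  have hDnil : D [] = ((fun _ => 0 : ℕ → ℕ), 0) := rfl
  have hGood : ∀ l, ¬(f '' cylinder (D l).1 (D l).2).Countable := by
    intro l
    induction l with
    | nil =>
      rw [hDnil]
      simpa [cylinder_zero, image_univ] using hc
    | cons b l ih =>
      have : D (b :: l) = if b then r (D l) ih else q (D l) ih := by
        simp only [hD]
        rw [dif_pos ih]
      rw [this]
      cases b <;> simp [hqunc, hrunc]
  have hDcons : ∀ b l, D (b :: l) = if b then r (D l) (hGood l) else q (D l) (hGood l) := by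
    intro b l
    simp only [hD]
    rw [dif_pos (hGood l)]
  have hmono : ∀ b l, cylinder (D (b :: l)).1 (D (b :: l)).2 ⊆ cylinder (D l).1 (D l).2 := by
    intro b l
    rw [hDcons]
    cases b <;> simp [hqsub, hrsub]
  have hlen : ∀ b l, (D l).2 < (D (b :: l)).2 := by
    intro b l
    rw [hDcons]
    cases b <;> simp [hq, hr]
  -- chains along restrictions
  have hchain : ∀ (x : ℕ → Bool) (m n : ℕ), m ≤ n →
      cylinder (D (res x n)).1 (D (res x n)).2 ⊆ cylinder (D (res x m)).1 (D (res x m)).2 := by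
    intro x m n hmn
    induction hmn with
    | refl => exact Subset.rfl
    | @step n h ih =>
      calc cylinder (D (res x (n + 1))).1 (D (res x (n + 1))).2
          ⊆ cylinder (D (res x n)).1 (D (res x n)).2 := by
            rw [res_succ]; exact hmono _ _
        _ ⊆ _ := ih
  have hlen' : ∀ (x : ℕ → Bool) (n : ℕ), n ≤ (D (res x n)).2 := by
    intro x n
    induction n with
    | zero => exact Nat.zero_le _
    | succ n ih =>
      have := hlen (x n) (res x n)
      rw [← res_succ] at this
      exact Nat.succ_le_of_lt (Nat.lt_of_le_of_lt ih this)
  -- the limit point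
  set z : (ℕ → Bool) → (ℕ → ℕ) := fun x k => (D (res x (k + 1))).1 k with hz
  have hmem : ∀ (x : ℕ → Bool) (n : ℕ),
      z x ∈ cylinder (D (res x n)).1 (D (res x n)).2 := by
    intro x n
    rw [mem_cylinder_iff]
    intro k hk
    rcases le_total (k + 1) n with h | h
    · have h1 : (D (res x n)).1 ∈ cylinder (D (res x (k + 1))).1 (D (res x (k + 1))).2 :=
        hchain x (k + 1) n h (self_mem_cylinder _ _)
      have h2 : k < (D (res x (k + 1))).2 := hlen' x (k + 1)
      exact ((mem_cylinder_iff.1 h1 k h2).symm : z x k = _)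
    · have h1 : (D (res x (k + 1))).1 ∈ cylinder (D (res x n)).1 (D (res x n)).2 :=
        hchain x n (k + 1) h (self_mem_cylinder _ _)
      exact mem_cylinder_iff.1 h1 k hk
  set F : (ℕ → Bool) → (ℕ → Bool) := fun x => f (z x) with hF
  have hFA : ∀ x, F x ∈ range f := fun x => ⟨z x, rfl⟩
  have hFinj : Function.Injective F := by
    intro x y hxy
    by_contra hne
    set n := firstDiff x y with hn
    have hres : res x n = res y n := res_eq_res.2 fun m hm =>
      apply_eq_of_lt_firstDiff hm
    have hxn : x n ≠ y n := apply_firstDiff_ne hne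
    have hFx : F x ∈ f '' cylinder (D (x n :: res x n)).1 (D (x n :: res x n)).2 := by
      refine ⟨z x, ?_, rfl⟩
      have := hmem x (n + 1)
      rwa [res_succ] at this
    have hFy : F y ∈ f '' cylinder (D (y n :: res x n)).1 (D (y n :: res x n)).2 := by
      refine ⟨z y, ?_, rfl⟩
      have := hmem y (n + 1)
      rwa [res_succ, ← hres] at this
    have hd : Disjoint (f '' cylinder (D (false :: res x n)).1 (D (false :: res x n)).2)
        (f '' cylinder (D (true :: res x n)).1 (D (true :: res x n)).2) := by
      rw [hDcons, hDcons]
      simpa using hdisj (D (res x n)) (hGood (res x n))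
    rw [hxy] at hFx
    cases hxnv : x n <;> cases hynv : y n
    · rw [hxnv, hynv] at hxn; exact hxn rfl
    · rw [hxnv] at hFx; rw [hynv] at hFy
      exact Set.disjoint_left.1 hd hFx hFy
    · rw [hxnv] at hFx; rw [hynv] at hFy
      exact Set.disjoint_left.1 hd hFy hFx
    · rw [hxnv, hynv] at hxn; exact hxn rfl
  have hzcont : Continuous z := by
    refine continuous_pi fun k => ?_
    rw [continuous_iff_continuousAt]
    intro x
    have hev : (fun y => z y k) =ᶠ[nhds x] fun _ => z x k := by
      refine Filter.eventuallyEq_of_mem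
        ((isOpen_cylinder (fun _ : ℕ => Bool) x (k + 1)).mem_nhds
          (self_mem_cylinder _ _)) ?_
      intro y hy
      have : res y (k + 1) = res x (k + 1) :=
        res_eq_res.2 (mem_cylinder_iff.1 hy)
      simp only [hz, this]
    exact hev.continuousAt
  have hFcont : Continuous F := hf.comp hzcont
  -- cardinality
  have hupper : Cardinal.mk (range f) ≤ 2 ^ Cardinal.aleph0 := by
    calc Cardinal.mk (range f) ≤ Cardinal.mk (ℕ → Bool) := Cardinal.mk_set_le _
      _ = 2 ^ Cardinal.aleph0 := by
        rw [Cardinal.mk_arrow]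
        simp [Cardinal.mk_bool]
  have hlower : 2 ^ Cardinal.aleph0 ≤ Cardinal.mk (range f) := by
    have hinj : Function.Injective (fun x : ℕ → Bool => (⟨F x, hFA x⟩ : range f)) :=
      fun a b hab => hFinj (congrArg Subtype.val hab)
    calc (2 : Cardinal) ^ Cardinal.aleph0 = Cardinal.mk (ℕ → Bool) := by
          rw [Cardinal.mk_arrow]; simp [Cardinal.mk_bool]
      _ ≤ Cardinal.mk (range f) := Cardinal.mk_le_of_injective hinj
  exact le_antisymm hupper hlower
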